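/- If Z-type single-qubit Paulis X_i and Z_i both belong to the group ⟨M⟩ generated by a set M of Pauli operators, then the channel Π_M := ∘_{P∈M} Π_P satisfies Π_M(ρ) = Π_M((I_i/2) ⊗ Tr_i(ρ)) for all ρ, i.e., qubit i is effectively depolarized. -/

import Mathlib

open Matrix

noncomputable def pX : Matrix (Fin 2) (Fin 2) ℂ := !![0, 1; 1, 0]
noncomputable def pZ : Matrix (Fin 2) (Fin 2) ℂ := !![1, 0; 0, -1]

/-- The single-qubit Pauli letter `X^x Z^z` labelled by its symplectic bits. -/
noncomputable def letterOp (p : ZMod 2 × ZMod 2) : Matrix (Fin 2) (Fin 2) ℂ :=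
  pX ^ p.1.val * pZ ^ p.2.val

/-- The phaseless `n`-qubit Pauli operator with symplectic label `g`. -/
noncomputable def labelOp {n : ℕ} (g : Fin n → ZMod 2 × ZMod 2) :
    Matrix (Fin n → Fin 2) (Fin n → Fin 2) ℂ :=
  Matrix.of fun x y => ∏ i, letterOp (g i) (x i) (y i)

/-- Label of the single-qubit Pauli `X_i`. -/
def xLabel {n : ℕ} (i : Fin n) : Fin n → ZMod 2 × ZMod 2 :=
  fun j => if j = i then (1, 0) else 0

/-- Label of the single-qubit Pauli `Z_i`. -/
def zLabel {n : ℕ} (i : Fin n) : Fin n → ZMod 2 × ZMod 2 :=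
  fun j => if j = i then (0, 1) else 0

/-- Replacing qubit `i` of `ρ` by the maximally mixed state: `(I_i/2) ⊗ Tr_i(ρ)`. -/
noncomputable def depolAt {n : ℕ} (i : Fin n)
    (ρ : Matrix (Fin n → Fin 2) (Fin n → Fin 2) ℂ) :
    Matrix (Fin n → Fin 2) (Fin n → Fin 2) ℂ :=
  Matrix.of fun x y =>
    if x i = y i then
      (1/2 : ℂ) * ∑ b : Fin 2, ρ (Function.update x i b) (Function.update y i b)
    else 0

def f2 : ZMod 2 → Fin 2 := fun a => ⟨a.val, a.val_lt⟩

noncomputable def tw (b : ZMod 2) (v : Fin 2) : ℂ := (-1) ^ (b.val * v.val)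

lemma zmod2_cases : ∀ a : ZMod 2, a = 0 ∨ a = 1 := by decide

@[simp] lemma val_zero2 : (0 : ZMod 2).val = 0 := rfl
@[simp] lemma two_eq_zero2 : (1 + 1 : ZMod 2) = 0 := rfl
@[simp] lemma val_one2 : (1 : ZMod 2).val = 1 := rfl

lemma letterOp_apply (p : ZMod 2 × ZMod 2) (u v : Fin 2) :
    letterOp p u v = if u = v + f2 p.1 then tw p.2 v else 0 := by
  obtain ⟨a, b⟩ := p
  rcases zmod2_cases a with ha | ha <;> rcases zmod2_cases b with hb | hb <;>
    subst ha hb <;> fin_cases u <;> fin_cases v <;>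
    simp [letterOp, pX, pZ, f2, tw, Matrix.mul_apply, Fin.sum_univ_two, pow_succ]


@[simp] lemma tw_conj (b : ZMod 2) (v : Fin 2) : (starRingEnd ℂ) (tw b v) = tw b v := by
  simp [tw]

lemma tw_succ (b : ZMod 2) (v : Fin 2) : tw b (v + 1) = (-1) ^ b.val * tw b v := by
  rcases zmod2_cases b with hb | hb <;> subst hb <;> fin_cases v <;> simp [tw] <;> norm_num

lemma tw_z (b : ZMod 2) (v : Fin 2) : tw (b + 1) v = (-1) ^ (v.val) * tw b v := by
  rcases zmod2_cases b with hb | hb <;> subst hb <;> fin_cases v <;> simp [tw] <;> norm_num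

lemma f2_add (a b : ZMod 2) : f2 (a + b) = f2 a + f2 b := by
  revert a b; decide

lemma fin2_add_add (v : Fin 2) (c : Fin 2) : v + c + c = v := by revert v c; decide

section nq
variable {n : ℕ}

/-- bit-flip part of `g` applied to a computational-basis index -/
def sh (g : Fin n → ZMod 2 × ZMod 2) (x : Fin n → Fin 2) : Fin n → Fin 2 :=
  fun j => x j + f2 (g j).1

noncomputable def mSign (g : Fin n → ZMod 2 × ZMod 2) (x : Fin n → Fin 2) : ℂ :=
  ∏ j, tw (g j).2 (x j)

lemma sh_sh (g : Fin n → ZMod 2 × ZMod 2) (x : Fin n → Fin 2) : sh g (sh g x) = x := by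
  funext j; simp [sh, fin2_add_add]

lemma labelOp_apply (g : Fin n → ZMod 2 × ZMod 2) (x y : Fin n → Fin 2) :
    labelOp g x y = if x = sh g y then mSign g y else 0 := by
  have : labelOp g x y = ∏ j, (if x j = y j + f2 (g j).1 then tw (g j).2 (y j) else 0) := by
    simp only [labelOp, Matrix.of_apply]
    exact Finset.prod_congr rfl fun j _ => letterOp_apply _ _ _
  rw [this]
  by_cases h : x = sh g y
  · rw [if_pos h]
    refine (Finset.prod_congr rfl fun j _ => ?_).trans rfl
    rw [if_pos]; exact congrFun h j
  · rw [if_neg h]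
    have : ∃ j, ¬ (x j = y j + f2 (g j).1) := by
      by_contra hc; push_neg at hc; exact h (funext hc)
    obtain ⟨j, hj⟩ := this
    exact Finset.prod_eq_zero (Finset.mem_univ j) (if_neg hj)

end nq

section nq2
variable {n : ℕ}

lemma mSign_conj (g : Fin n → ZMod 2 × ZMod 2) (x : Fin n → Fin 2) :
    (starRingEnd ℂ) (mSign g x) = mSign g x := by
  simp [mSign, map_prod]

lemma labelOp_apply' (g : Fin n → ZMod 2 × ZMod 2) (x u : Fin n → Fin 2) :
    labelOp g x u = if u = sh g x then mSign g u else 0 := by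
  rw [labelOp_apply]
  exact if_congr ⟨fun h => by rw [h, sh_sh], fun h => by rw [h, sh_sh]⟩ rfl rfl

lemma conj_apply (g : Fin n → ZMod 2 × ZMod 2)
    (ρ : Matrix (Fin n → Fin 2) (Fin n → Fin 2) ℂ) (x y : Fin n → Fin 2) :
    (labelOp g * ρ * (labelOp g)ᴴ) x y
      = mSign g (sh g x) * mSign g (sh g y) * ρ (sh g x) (sh g y) := by
  simp only [Matrix.mul_apply, Matrix.conjTranspose_apply, labelOp_apply',
    apply_ite (star : ℂ → ℂ), star_zero, ite_mul, mul_ite, zero_mul, mul_zero,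
    Finset.sum_ite_eq', Finset.mem_univ, if_true]
  have : (star (mSign g (sh g y)) : ℂ) = mSign g (sh g y) := mSign_conj g _
  rw [this]; ring

lemma mSign_split (g : Fin n → ZMod 2 × ZMod 2) (v : Fin n → Fin 2) (i : Fin n) :
    mSign g v = tw (g i).2 (v i) * ∏ j ∈ Finset.univ.erase i, tw (g j).2 (v j) :=
  (Finset.mul_prod_erase _ _ (Finset.mem_univ i)).symm

lemma mSign_update (g : Fin n → ZMod 2 × ZMod 2) (v : Fin n → Fin 2) (i : Fin n) :
    mSign g (Function.update v i (v i + 1)) = (-1) ^ ((g i).2.val) * mSign g v := by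
  rw [mSign_split g _ i, mSign_split g v i, Function.update_self, tw_succ]
  rw [mul_assoc]
  congr 1
  congr 1
  exact Finset.prod_congr rfl fun j hj =>
    by rw [Function.update_of_ne (Finset.ne_of_mem_erase hj)]

lemma sh_z (i : Fin n) (g : Fin n → ZMod 2 × ZMod 2) (x : Fin n → Fin 2) :
    sh (g + zLabel i) x = sh g x := by
  funext j
  simp only [sh, Pi.add_apply, zLabel, Prod.fst_add]
  by_cases h : j = i <;> simp [h]

lemma sh_x (i : Fin n) (g : Fin n → ZMod 2 × ZMod 2) (x : Fin n → Fin 2) :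
    sh (g + xLabel i) x = Function.update (sh g x) i (sh g x i + 1) := by
  funext j
  by_cases h : j = i
  · subst h
    simp only [sh, Pi.add_apply, xLabel, if_pos rfl, Prod.fst_add, f2_add,
      Function.update_self]
    show x j + (f2 (g j).1 + f2 1) = x j + f2 (g j).1 + 1
    have : f2 1 = 1 := rfl
    rw [this, add_assoc]
  · simp only [sh, Pi.add_apply, xLabel, if_neg h, Function.update_of_ne h]
    simp [sh]

lemma mSign_zshift (i : Fin n) (g : Fin n → ZMod 2 × ZMod 2) (v : Fin n → Fin 2) :
    mSign (g + zLabel i) v = (-1) ^ ((v i).val) * mSign g v := by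
  rw [mSign_split _ v i, mSign_split g v i]
  have h1 : ((g + zLabel i) i).2 = (g i).2 + 1 := by simp [zLabel]
  rw [h1, tw_z, mul_assoc]
  congr 1
  congr 1
  refine Finset.prod_congr rfl fun j hj => ?_
  have : ((g + zLabel i) j).2 = (g j).2 := by
    simp [zLabel, Finset.ne_of_mem_erase hj]
  rw [this]

lemma mSign_xshift (i : Fin n) (g : Fin n → ZMod 2 × ZMod 2) (v : Fin n → Fin 2) :
    mSign (g + xLabel i) v = mSign g v := by
  unfold mSign
  refine Finset.prod_congr rfl fun j _ => ?_
  have : ((g + xLabel i) j).2 = (g j).2 := by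
    by_cases h : j = i <;> simp [xLabel, h]
  rw [this]

end nq2

section main
variable {n : ℕ}

lemma eps_xshift (i : Fin n) (g : Fin n → ZMod 2 × ZMod 2) (x : Fin n → Fin 2) :
    mSign (g + xLabel i) (sh (g + xLabel i) x)
      = (-1) ^ ((g i).2.val) * mSign g (sh g x) := by
  rw [sh_x, mSign_xshift, mSign_update]

lemma eps_zshift (i : Fin n) (g : Fin n → ZMod 2 × ZMod 2) (x : Fin n → Fin 2) :
    mSign (g + zLabel i) (sh (g + zLabel i) x)
      = (-1) ^ ((sh g x i).val) * mSign g (sh g x) := by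
  rw [sh_z, mSign_zshift]

lemma neg_one_sq_pow (k : ℕ) : ((-1 : ℂ)) ^ k * (-1) ^ k = 1 := by
  rw [← mul_pow]; norm_num

lemma fin2_neq_sign {a b : Fin 2} (h : a ≠ b) :
    ((-1 : ℂ)) ^ a.val * (-1) ^ b.val = -1 := by
  fin_cases a <;> fin_cases b <;> simp_all

lemma sum_fin2 (F : Fin 2 → ℂ) (w : Fin 2) : (∑ b, F b) = F w + F (w + 1) := by
  fin_cases w <;>
    simp [Fin.sum_univ_two, show ((1 : Fin 2) + 1 = 0) from rfl, add_comm]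

lemma fin2_add_right_cancel {a b c : Fin 2} (h : a + c = b + c) : a = b := by
  revert a b c; decide

lemma xLabel_self (i : Fin n) : xLabel i + xLabel i = 0 := by
  funext j; by_cases h : j = i <;> simp [xLabel, h] <;> exact ⟨rfl, rfl⟩

lemma zLabel_self (i : Fin n) : zLabel i + zLabel i = 0 := by
  funext j; by_cases h : j = i <;> simp [zLabel, h] <;> exact ⟨rfl, rfl⟩

lemma sum_shift (G : Finset (Fin n → ZMod 2 × ZMod 2)) (h : Fin n → ZMod 2 × ZMod 2)
    (hmem : ∀ a ∈ G, a + h ∈ G) (hinv : h + h = 0)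
    (F : (Fin n → ZMod 2 × ZMod 2) → ℂ) :
    ∑ g ∈ G, F g = ∑ g ∈ G, F (g + h) := by
  refine Finset.sum_nbij' (fun g => g + h) (fun g => g + h) hmem hmem
    (fun a _ => by rw [add_assoc, hinv, add_zero])
    (fun a _ => by rw [add_assoc, hinv, add_zero])
    (fun a ha => by rw [add_assoc, hinv, add_zero])

end main

/-- If both `X_i` and `Z_i` lie in the (phaseless) error group `G = ⟨M⟩`, then the channel
`Π_M(ρ) = (1/|⟨M⟩|) Σ_{Q ∈ ⟨M⟩} Q ρ Q†` satisfies `Π_M(ρ) = Π_M((I_i/2) ⊗ Tr_i(ρ))`: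
qubit `i` is effectively depolarized. -/
theorem stmt8 (n : ℕ) (i : Fin n) (G : Finset (Fin n → ZMod 2 × ZMod 2))
    (hzero : (0 : Fin n → ZMod 2 × ZMod 2) ∈ G)
    (hclosed : ∀ a ∈ G, ∀ b ∈ G, a + b ∈ G)
    (hX : xLabel i ∈ G) (hZ : zLabel i ∈ G) :
    ∀ ρ : Matrix (Fin n → Fin 2) (Fin n → Fin 2) ℂ,
      (G.card : ℂ)⁻¹ • ∑ g ∈ G, labelOp g * ρ * (labelOp g)ᴴ
        = (G.card : ℂ)⁻¹ • ∑ g ∈ G, labelOp g * depolAt i ρ * (labelOp g)ᴴ := by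
  intro ρ
  congr 1
  ext x y
  rw [Matrix.sum_apply, Matrix.sum_apply]
  have hzmem : ∀ a ∈ G, a + zLabel i ∈ G := fun a ha => hclosed a ha _ hZ
  have hxmem : ∀ a ∈ G, a + xLabel i ∈ G := fun a ha => hclosed a ha _ hX
  have hL : ∀ σ : Matrix (Fin n → Fin 2) (Fin n → Fin 2) ℂ,
      ∑ g ∈ G, (labelOp g * σ * (labelOp g)ᴴ) x y
        = ∑ g ∈ G, mSign g (sh g x) * mSign g (sh g y) * σ (sh g x) (sh g y) :=
    fun σ => Finset.sum_congr rfl fun g _ => conj_apply g σ x y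
  rw [hL, hL]
  by_cases hxy : x i = y i
  · -- qubit-i indices agree: depolarizing entry is an average of two conjugates
    have hsh : ∀ g : Fin n → ZMod 2 × ZMod 2, sh g x i = sh g y i := fun g => by
      simp [sh, hxy]
    have hR : ∀ g : Fin n → ZMod 2 × ZMod 2, depolAt i ρ (sh g x) (sh g y)
        = (1/2 : ℂ) * (ρ (sh g x) (sh g y)
            + ρ (sh (g + xLabel i) x) (sh (g + xLabel i) y)) := by
      intro g
      have h1 : depolAt i ρ (sh g x) (sh g y)
          = (1/2 : ℂ) * ∑ b : Fin 2,
              ρ (Function.update (sh g x) i b) (Function.update (sh g y) i b) := by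
        simp only [depolAt, Matrix.of_apply, if_pos (hsh g)]
      rw [h1, sum_fin2 _ (sh g x i)]
      have e1 : Function.update (sh g x) i (sh g x i) = sh g x :=
        Function.update_eq_self _ _
      have e2 : Function.update (sh g y) i (sh g x i) = sh g y := by
        rw [hsh g]; exact Function.update_eq_self _ _
      have e3 : Function.update (sh g x) i (sh g x i + 1) = sh (g + xLabel i) x :=
        (sh_x i g x).symm
      have e4 : Function.update (sh g y) i (sh g x i + 1) = sh (g + xLabel i) y := by
        rw [hsh g]; exact (sh_x i g y).symm
      rw [e1, e2, e3, e4]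
    have hT : ∑ g ∈ G, mSign g (sh g x) * mSign g (sh g y)
          * ρ (sh (g + xLabel i) x) (sh (g + xLabel i) y)
        = ∑ g ∈ G, mSign g (sh g x) * mSign g (sh g y) * ρ (sh g x) (sh g y) := by
      rw [sum_shift G (xLabel i) hxmem (xLabel_self i)
        (fun g => mSign g (sh g x) * mSign g (sh g y) * ρ (sh g x) (sh g y))]
      refine Finset.sum_congr rfl fun g _ => ?_
      rw [eps_xshift i g x, eps_xshift i g y]
      have hk := neg_one_sq_pow ((g i).2.val)
      calc mSign g (sh g x) * mSign g (sh g y)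
              * ρ (sh (g + xLabel i) x) (sh (g + xLabel i) y)
          = ((-1 : ℂ) ^ ((g i).2.val) * (-1) ^ ((g i).2.val))
              * (mSign g (sh g x) * mSign g (sh g y))
              * ρ (sh (g + xLabel i) x) (sh (g + xLabel i) y) := by rw [hk]; ring
        _ = (-1 : ℂ) ^ ((g i).2.val) * mSign g (sh g x)
              * ((-1) ^ ((g i).2.val) * mSign g (sh g y))
              * ρ (sh (g + xLabel i) x) (sh (g + xLabel i) y) := by ring
    have step : ∑ g ∈ G, mSign g (sh g x) * mSign g (sh g y)
          * depolAt i ρ (sh g x) (sh g y)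
        = ∑ g ∈ G, ((1/2 : ℂ) * (mSign g (sh g x) * mSign g (sh g y)
              * ρ (sh g x) (sh g y))
            + (1/2 : ℂ) * (mSign g (sh g x) * mSign g (sh g y)
              * ρ (sh (g + xLabel i) x) (sh (g + xLabel i) y))) := by
      refine Finset.sum_congr rfl fun g _ => ?_
      rw [hR g]; ring
    rw [step, Finset.sum_add_distrib, ← Finset.mul_sum, ← Finset.mul_sum, hT]
    ring
  · -- qubit-i indices differ: both sides vanish
    have hne : ∀ g : Fin n → ZMod 2 × ZMod 2, sh g x i ≠ sh g y i := by
      intro g h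
      exact hxy (fin2_add_right_cancel (a := x i) (b := y i) (c := f2 (g i).1) h)
    have hRz : ∑ g ∈ G, mSign g (sh g x) * mSign g (sh g y)
          * depolAt i ρ (sh g x) (sh g y) = 0 := by
      refine Finset.sum_eq_zero fun g _ => ?_
      have : depolAt i ρ (sh g x) (sh g y) = 0 := by
        simp only [depolAt, Matrix.of_apply, if_neg (hne g)]
      rw [this, mul_zero]
    rw [hRz]
    have hS := sum_shift G (zLabel i) hzmem (zLabel_self i)
      (fun g => mSign g (sh g x) * mSign g (sh g y) * ρ (sh g x) (sh g y))
    have hS2 : ∑ g ∈ G, mSign (g + zLabel i) (sh (g + zLabel i) x)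
          * mSign (g + zLabel i) (sh (g + zLabel i) y)
          * ρ (sh (g + zLabel i) x) (sh (g + zLabel i) y)
        = -∑ g ∈ G, mSign g (sh g x) * mSign g (sh g y) * ρ (sh g x) (sh g y) := by
      rw [← Finset.sum_neg_distrib]
      refine Finset.sum_congr rfl fun g _ => ?_
      rw [eps_zshift i g x, eps_zshift i g y, sh_z, sh_z]
      have hk := fin2_neq_sign (hne g)
      calc (-1 : ℂ) ^ ((sh g x i).val) * mSign g (sh g x)
              * ((-1) ^ ((sh g y i).val) * mSign g (sh g y))
              * ρ (sh g x) (sh g y)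
          = ((-1 : ℂ) ^ ((sh g x i).val) * (-1) ^ ((sh g y i).val))
              * (mSign g (sh g x) * mSign g (sh g y) * ρ (sh g x) (sh g y)) := by ring
        _ = -(mSign g (sh g x) * mSign g (sh g y) * ρ (sh g x) (sh g y)) := by
              rw [hk]; ring
    rw [hS2] at hS
    linear_combination hS / 2
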